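/- Let s ≥ 1, n ≥ 1, let θ ∈ 𝕋^s have pairwise distinct entries, and let g^a ∈ ℂ^s. Define g^b ∈ ℂ^s by g^b_l = conj(g^a_l)·θ_l^{−n}·∏_{0 ≤ i ≤ s−1, i ≠ l} conj(θ_i). Let û^a, ũ^a, u^a and û^b, ũ^b, u^b be the polynomials built from (θ, g^a) and (θ, g^b) respectively. Then for every z ∈ 𝕋: |û^b(z)|² + |ũ^b(z)|² = |û^a(z)|² + |ũ^a(z)|² and û^b(z)·conj(ũ^b(z)) = û^a(z)·conj(ũ^a(z)). In particular |u^b(z)|² = |u^a(z)|² for every z ∈ 𝕋, so g^a and g^b produce identical phase-less measurements |V_n(z)^T V_n(θ) g|² for any sample vector z ∈ 𝕋^m. -/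

import Mathlib

open Polynomial Finset Complex Matrix

/-- `t_l(z) = ∏_{i ≠ l} (z·θ_i − 1)`. -/
noncomputable def tPoly (s : ℕ) (θ : Fin s → ℂ) (l : Fin s) : Polynomial ℂ :=
  ∏ i ∈ Finset.univ.erase l, (Polynomial.C (θ i) * Polynomial.X - 1)

/-- `û(z) = Σ_l g_l · θ_l^n · t_l(z)`. -/
noncomputable def uHat (s n : ℕ) (θ g : Fin s → ℂ) : Polynomial ℂ :=
  ∑ l : Fin s, Polynomial.C (g l * θ l ^ n) * tPoly s θ l

/-- `ũ(z) = −Σ_l g_l · t_l(z)`. -/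
noncomputable def uTilde (s : ℕ) (θ g : Fin s → ℂ) : Polynomial ℂ :=
  -∑ l : Fin s, Polynomial.C (g l) * tPoly s θ l

/-- `u(z) = z^n·û(z) + ũ(z)`. -/
noncomputable def uPoly (s n : ℕ) (θ g : Fin s → ℂ) : Polynomial ℂ :=
  Polynomial.X ^ n * uHat s n θ g + uTilde s θ g

/-- The `n × k` Vandermonde matrix with `(j,l)` entry `w_l^j`. -/
noncomputable def vand (n k : ℕ) (w : Fin k → ℂ) : Matrix (Fin n) (Fin k) ℂ :=
  Matrix.of fun j l => w l ^ (j : ℕ)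

/-- Theorem `thm:dual_sol`: the dual vector
`g^b_l = conj(g^a_l)·θ_l^{−n}·∏_{i≠l} conj(θ_i)` produces, on the unit circle, the same
quantities `|û|² + |ũ|²` and `û·conj(ũ)` as `g^a`; in particular `|u^b(z)|² = |u^a(z)|²`
on `𝕋`, so `g^a` and `g^b` give identical phase-less measurements
`|V_n(z)^T V_n(θ) g|²` for any samples on `𝕋`. -/
lemma unit_mul_conj {w : ℂ} (hw : ‖w‖ = 1) : w * (starRingEnd ℂ) w = 1 := by
  rw [Complex.mul_conj, Complex.normSq_eq_norm_sq, hw]; norm_num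

lemma conj_geom_sum (n : ℕ) {u : ℂ} (hu : u * (starRingEnd ℂ) u = 1) :
    (starRingEnd ℂ) (∑ k ∈ Finset.range n, u ^ k) =
      ((starRingEnd ℂ) u) ^ (n - 1) * ∑ k ∈ Finset.range n, u ^ k := by
  rw [map_sum, Finset.mul_sum]
  simp only [map_pow]
  rw [← Finset.sum_range_reflect (fun k => ((starRingEnd ℂ) u) ^ k) n]
  refine Finset.sum_congr rfl fun k hk => ?_
  rw [Finset.mem_range] at hk
  have h1 : n - 1 = (n - 1 - k) + k := by omega
  rw [h1, pow_add, mul_assoc, ← mul_pow, mul_comm ((starRingEnd ℂ) u) u, hu, one_pow, mul_one]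
  congr 2
  omega

lemma conj_tPoly_eval (s : ℕ) (θ : Fin s → ℂ)
    (hθ : ∀ i, θ i * (starRingEnd ℂ) (θ i) = 1)
    {z : ℂ} (hz : z * (starRingEnd ℂ) z = 1) (l : Fin s) :
    (starRingEnd ℂ) ((tPoly s θ l).eval z) =
      (-1) ^ (s - 1) * ((starRingEnd ℂ) z) ^ (s - 1) *
        (∏ i ∈ Finset.univ.erase l, (starRingEnd ℂ) (θ i)) * (tPoly s θ l).eval z := by
  have hcard : (Finset.univ.erase l).card = s - 1 := by
    rw [Finset.card_erase_of_mem (Finset.mem_univ l), Finset.card_univ, Fintype.card_fin]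
  rw [tPoly, Polynomial.eval_prod, map_prod, ← hcard, ← Finset.prod_const (-1 : ℂ),
    ← Finset.prod_const ((starRingEnd ℂ) z), ← Finset.prod_mul_distrib,
    ← Finset.prod_mul_distrib, ← Finset.prod_mul_distrib]
  refine Finset.prod_congr rfl fun i _ => ?_
  simp only [Polynomial.eval_sub, Polynomial.eval_mul, Polynomial.eval_C, Polynomial.eval_X,
    Polynomial.eval_one, map_sub, _root_.map_mul, _root_.map_one]
  have h2 : (θ i * (starRingEnd ℂ) (θ i)) * (z * (starRingEnd ℂ) z) = 1 * 1 := by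
    rw [hθ i, hz]
  linear_combination h2

lemma uHat_gb (s n : ℕ) (hs : 1 ≤ s) (θ ga gb : Fin s → ℂ)
    (hθ : ∀ i, θ i * (starRingEnd ℂ) (θ i) = 1)
    (hgb : ∀ l, gb l = (starRingEnd ℂ) (ga l) * (θ l ^ n)⁻¹ *
      ∏ i ∈ Finset.univ.erase l, (starRingEnd ℂ) (θ i))
    {z : ℂ} (hz : z * (starRingEnd ℂ) z = 1) :
    (uHat s n θ gb).eval z =
      (-1) ^ s * z ^ (s - 1) * (starRingEnd ℂ) ((uTilde s θ ga).eval z) := by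
  have hsign : ((-1 : ℂ)) ^ s * (-1) ^ (s - 1) = -1 := by
    have : s = (s - 1) + 1 := by omega
    rw [this]
    rw [← pow_add, show s - 1 + 1 + (s - 1 + 1 - 1) = 2 * (s - 1) + 1 by omega,
      pow_succ, pow_mul, neg_one_sq, one_pow, one_mul]
  have hzz : z ^ (s - 1) * ((starRingEnd ℂ) z) ^ (s - 1) = 1 := by
    rw [← mul_pow, hz, one_pow]
  simp only [uHat, uTilde, Polynomial.eval_finset_sum, Polynomial.eval_mul, Polynomial.eval_C,
    Polynomial.eval_neg, map_neg, map_sum, _root_.map_mul, mul_neg, Finset.mul_sum,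
    ← Finset.sum_neg_distrib]
  refine Finset.sum_congr rfl fun l _ => ?_
  rw [hgb l, conj_tPoly_eval s θ hθ hz l]
  have hθn : (θ l ^ n)⁻¹ * θ l ^ n = 1 := by
    have : θ l ≠ 0 := by
      intro h
      have := hθ l; rw [h] at this; simp at this
    field_simp
  set a := (starRingEnd ℂ) (ga l)
  set P := (∏ i ∈ Finset.univ.erase l, (starRingEnd ℂ) (θ i))
  set T := (tPoly s θ l).eval z
  linear_combination (a * P * T) * hθn +
    (z ^ (s-1) * ((starRingEnd ℂ) z) ^ (s-1) * a * P * T) * hsign +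
    (-(a * P * T)) * hzz

lemma uTilde_gb (s n : ℕ) (hs : 1 ≤ s) (θ ga gb : Fin s → ℂ)
    (hθ : ∀ i, θ i * (starRingEnd ℂ) (θ i) = 1)
    (hgb : ∀ l, gb l = (starRingEnd ℂ) (ga l) * (θ l ^ n)⁻¹ *
      ∏ i ∈ Finset.univ.erase l, (starRingEnd ℂ) (θ i))
    {z : ℂ} (hz : z * (starRingEnd ℂ) z = 1) :
    (uTilde s θ gb).eval z =
      (-1) ^ s * z ^ (s - 1) * (starRingEnd ℂ) ((uHat s n θ ga).eval z) := by
  have hsign : ((-1 : ℂ)) ^ s * (-1) ^ (s - 1) = -1 := by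
    have : s = (s - 1) + 1 := by omega
    rw [this]
    rw [← pow_add, show s - 1 + 1 + (s - 1 + 1 - 1) = 2 * (s - 1) + 1 by omega,
      pow_succ, pow_mul, neg_one_sq, one_pow, one_mul]
  have hzz : z ^ (s - 1) * ((starRingEnd ℂ) z) ^ (s - 1) = 1 := by
    rw [← mul_pow, hz, one_pow]
  simp only [uHat, uTilde, Polynomial.eval_finset_sum, Polynomial.eval_mul, Polynomial.eval_C,
    Polynomial.eval_pow, Polynomial.eval_neg, map_sum, _root_.map_mul, map_pow, Finset.mul_sum,
    ← Finset.sum_neg_distrib, neg_eq_iff_eq_neg, ← Finset.sum_neg_distrib]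
  refine Finset.sum_congr rfl fun l _ => ?_
  rw [hgb l, conj_tPoly_eval s θ hθ hz l]
  have hθ0 : θ l ≠ 0 := by
    intro h
    have := hθ l; rw [h] at this; simp at this
  have ht' : (θ l ^ n)⁻¹ = (starRingEnd ℂ) (θ l) ^ n := by
    refine inv_eq_of_mul_eq_one_right ?_
    rw [← mul_pow, hθ l, one_pow]
  rw [ht']
  set a := (starRingEnd ℂ) (ga l)
  set q := (starRingEnd ℂ) (θ l) ^ n
  set P := (∏ i ∈ Finset.univ.erase l, (starRingEnd ℂ) (θ i))
  set T := (tPoly s θ l).eval z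
  linear_combination (-(z ^ (s-1) * ((starRingEnd ℂ) z) ^ (s-1) * a * q * P * T)) * hsign +
    (a * q * P * T) * hzz

theorem dual_solution_same_measurements (s n : ℕ) (hs : 1 ≤ s) (hn : 1 ≤ n)
    (θ : Fin s → ℂ) (hθT : ∀ l, ‖θ l‖ = 1) (hθinj : Function.Injective θ)
    (ga : Fin s → ℂ)
    (gb : Fin s → ℂ)
    (hgb : ∀ l, gb l = (starRingEnd ℂ) (ga l) * (θ l ^ n)⁻¹ *
      ∏ i ∈ Finset.univ.erase l, (starRingEnd ℂ) (θ i)) :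
    (∀ z : ℂ, ‖z‖ = 1 →
      ((uHat s n θ gb).eval z * (starRingEnd ℂ) ((uHat s n θ gb).eval z)
          + (uTilde s θ gb).eval z * (starRingEnd ℂ) ((uTilde s θ gb).eval z) =
        (uHat s n θ ga).eval z * (starRingEnd ℂ) ((uHat s n θ ga).eval z)
          + (uTilde s θ ga).eval z * (starRingEnd ℂ) ((uTilde s θ ga).eval z)) ∧
      ((uHat s n θ gb).eval z * (starRingEnd ℂ) ((uTilde s θ gb).eval z) =
        (uHat s n θ ga).eval z * (starRingEnd ℂ) ((uTilde s θ ga).eval z)) ∧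
      Complex.normSq ((uPoly s n θ gb).eval z) =
        Complex.normSq ((uPoly s n θ ga).eval z)) ∧
    (∀ m : ℕ, ∀ zs : Fin m → ℂ, (∀ j, ‖zs j‖ = 1) →
      ∀ j : Fin m,
        Complex.normSq ((((vand n m zs).transpose * vand n s θ).mulVec gb) j) =
          Complex.normSq ((((vand n m zs).transpose * vand n s θ).mulVec ga) j)) := by
  have hθ1 : ∀ i, θ i * (starRingEnd ℂ) (θ i) = 1 := fun i => unit_mul_conj (hθT i)
  constructor
  · intro z hz
    have hz1 : z * (starRingEnd ℂ) z = 1 := unit_mul_conj hz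
    have hub := uHat_gb s n hs θ ga gb hθ1 hgb hz1
    have hut := uTilde_gb s n hs θ ga gb hθ1 hgb hz1
    set A := (uHat s n θ ga).eval z with hA
    set B := (uTilde s θ ga).eval z with hB
    have hcc : ((-1 : ℂ) ^ s * z ^ (s - 1)) * ((-1 : ℂ) ^ s * ((starRingEnd ℂ) z) ^ (s - 1))
        = 1 := by
      rw [mul_mul_mul_comm, ← mul_pow, ← mul_pow, neg_mul_neg, one_mul, one_pow, hz1, one_pow,
        one_mul]
    refine ⟨?_, ?_, ?_⟩
    · rw [hub, hut]
      simp only [_root_.map_mul, map_pow, map_neg, _root_.map_one, Complex.conj_conj]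
      linear_combination ((starRingEnd ℂ) B * B + (starRingEnd ℂ) A * A) * hcc
    · rw [hub, hut]
      simp only [_root_.map_mul, map_pow, map_neg, _root_.map_one, Complex.conj_conj]
      linear_combination (A * (starRingEnd ℂ) B) * hcc
    · have hznn : z ^ n * ((starRingEnd ℂ) z) ^ n = 1 := by
        rw [← mul_pow, hz1, one_pow]
      apply Complex.ofReal_injective
      rw [← Complex.mul_conj, ← Complex.mul_conj]
      simp only [uPoly, Polynomial.eval_add, Polynomial.eval_mul, Polynomial.eval_pow,
        Polynomial.eval_X]
      rw [hub, hut]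
      simp only [map_add, _root_.map_mul, map_pow, map_neg, _root_.map_one, Complex.conj_conj]
      linear_combination
        (z ^ n * ((starRingEnd ℂ) z) ^ n * B * (starRingEnd ℂ) B
          + z ^ n * A * (starRingEnd ℂ) B
          + ((starRingEnd ℂ) z) ^ n * B * (starRingEnd ℂ) A
          + A * (starRingEnd ℂ) A) * hcc
        + (B * (starRingEnd ℂ) B - A * (starRingEnd ℂ) A) * hznn
  · intro m zs hzs j
    set w := zs j with hw
    have hw1 : w * (starRingEnd ℂ) w = 1 := unit_mul_conj (hzs j)
    have hM : (((vand n m zs).transpose * vand n s θ).mulVec gb) j =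
        (w ^ (n - 1) * ∏ i : Fin s, (starRingEnd ℂ) (θ i)) *
          (starRingEnd ℂ) ((((vand n m zs).transpose * vand n s θ).mulVec ga) j) := by
      simp only [Matrix.mulVec, dotProduct, Matrix.mul_apply, Matrix.transpose_apply,
        vand, Matrix.of_apply, map_sum, _root_.map_mul, map_pow, Finset.mul_sum]
      refine Finset.sum_congr rfl fun l _ => ?_
      rw [← hw]
      have hu : (w * θ l) * (starRingEnd ℂ) (w * θ l) = 1 := by
        rw [_root_.map_mul, mul_mul_mul_comm, hw1, hθ1 l, one_mul]
      have hS : ∑ k : Fin n, ((starRingEnd ℂ) w) ^ (k : ℕ) * ((starRingEnd ℂ) (θ l)) ^ (k : ℕ)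
          = ((starRingEnd ℂ) w) ^ (n - 1) * ((starRingEnd ℂ) (θ l)) ^ (n - 1) *
            ∑ k : Fin n, w ^ (k : ℕ) * θ l ^ (k : ℕ) := by
        have h := conj_geom_sum n hu
        rw [map_sum] at h
        simp only [map_pow, _root_.map_mul] at h
        simp only [← mul_pow]
        rw [Fin.sum_univ_eq_sum_range
            (fun k => ((starRingEnd ℂ) w * (starRingEnd ℂ) (θ l)) ^ k) n,
          Fin.sum_univ_eq_sum_range (fun k => (w * θ l) ^ k) n]
        exact h
      rw [hgb l, hS]
      have ht' : (θ l ^ n)⁻¹ = (starRingEnd ℂ) (θ l) ^ n := by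
        refine inv_eq_of_mul_eq_one_right ?_
        rw [← mul_pow, hθ1 l, one_pow]
      rw [ht', ← Finset.mul_prod_erase Finset.univ (fun i => (starRingEnd ℂ) (θ i))
        (Finset.mem_univ l)]
      have hwn : w ^ (n - 1) * ((starRingEnd ℂ) w) ^ (n - 1) = 1 := by
        rw [← mul_pow, hw1, one_pow]
      have hqq : ((starRingEnd ℂ) (θ l)) ^ n
          = (starRingEnd ℂ) (θ l) * ((starRingEnd ℂ) (θ l)) ^ (n - 1) := by
        rw [← pow_succ']
        congr 1
        omega
      set S := ∑ k : Fin n, w ^ (k : ℕ) * θ l ^ (k : ℕ)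
      set a := (starRingEnd ℂ) (ga l)
      set P := ∏ i ∈ Finset.univ.erase l, (starRingEnd ℂ) (θ i)
      set q := (starRingEnd ℂ) (θ l)
      linear_combination (S * a * P) * hqq - (S * a * P * q * q ^ (n - 1)) * hwn
    rw [hM, Complex.normSq_mul, Complex.normSq_conj]
    have : Complex.normSq (w ^ (n - 1) * ∏ i : Fin s, (starRingEnd ℂ) (θ i)) = 1 := by
      have habs : ‖w ^ (n - 1) * ∏ i : Fin s, (starRingEnd ℂ) (θ i)‖ = 1 := by
        rw [norm_mul, norm_pow, norm_prod]
        simp [Complex.norm_conj, hθT, hw, hzs j]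
      rw [Complex.normSq_eq_norm_sq, habs, one_pow]
    rw [this, one_mul]
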